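/- Let H be an N×N Hermitian complex matrix with an orthonormal eigenbasis {v_m} and eigenvalues {E_m}, let β ≥ 0, Δ > 0. For E' ∈ ℝ write N_{E',Δ} = #{m : E_m ∈ (E'−Δ, E']}. Suppose E ∈ ℝ satisfies N_{E,Δ} ≥ 1 and e^{−βE'} N_{E',Δ} ≤ e^{−βE} N_{E,Δ} for all E' ∈ ℝ. Suppose in addition there exists W > 0 such that Σ_{m : E_m ∈ (⟨H⟩_β − W/2, ⟨H⟩_β + W/2]} e^{−βE_m} ≥ Z_β/2, where ⟨H⟩_β = tr(H e^{−βH})/Z_β. Then for every N×N positive semidefinite matrix O: ⟨O⟩_{E,Δ} ≤ 2 e^{βΔ} (3 + W/Δ) · ⟨O⟩_β, where ⟨O⟩_{E,Δ} = N_{E,Δ}^{−1} Σ_{m : E_m ∈ (E−Δ,E]} ⟨v_m, O v_m⟩ and ⟨O⟩_β = tr(e^{−βH} O)/Z_β. -/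

import Mathlib

open scoped Matrix ComplexOrder

private lemma aux_traces (N : ℕ) (H : Matrix (Fin N) (Fin N) ℂ)
    (v : Fin N → Fin N → ℂ) (Em : Fin N → ℝ)
    (honb : ∀ m m', star (v m) ⬝ᵥ v m' = if m = m' then 1 else 0)
    (heig : ∀ m, H.mulVec (v m) = Em m • v m) (β : ℝ)
    (O : Matrix (Fin N) (Fin N) ℂ) :
    ((NormedSpace.exp ((-(β : ℂ)) • H)).trace).re = (∑ m, Real.exp (-β * Em m)) ∧
    ((NormedSpace.exp ((-(β : ℂ)) • H) * O).trace).re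
      = ∑ m, Real.exp (-β * Em m) * (star (v m) ⬝ᵥ O.mulVec (v m)).re := by
  classical
  set U : Matrix (Fin N) (Fin N) ℂ := Matrix.of fun i m => v m i with hUdef
  have hUU : Uᴴ * U = 1 := by
    ext m m'
    simpa [Matrix.mul_apply, Matrix.conjTranspose_apply, Matrix.one_apply,
      dotProduct, hUdef] using honb m m'
  have hU' : U * Uᴴ = 1 := mul_eq_one_comm.mp hUU
  have hUunit : IsUnit U := ⟨⟨U, Uᴴ, hU', hUU⟩, rfl⟩
  have hUinv : U⁻¹ = Uᴴ := Matrix.inv_eq_right_inv hU'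
  have hHU : H * U = U * Matrix.diagonal (fun m => (Em m : ℂ)) := by
    ext i m
    rw [Matrix.mul_apply, Matrix.mul_diagonal]
    have h := congrFun (heig m) i
    simp only [Matrix.mulVec, dotProduct, Pi.smul_apply, smul_eq_mul] at h
    simpa [hUdef, mul_comm] using h
  have hHdec : H = U * Matrix.diagonal (fun m => (Em m : ℂ)) * Uᴴ := by
    calc H = H * U * Uᴴ := by rw [mul_assoc, hU', mul_one]
    _ = _ := by rw [hHU]
  have hexp : NormedSpace.exp ((-(β : ℂ)) • H)
      = U * Matrix.diagonal (fun m => Complex.exp (-(β : ℂ) * Em m)) * Uᴴ := by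
    have h1 : (-(β : ℂ)) • H
        = U * Matrix.diagonal (fun m => (-(β : ℂ)) * Em m) * U⁻¹ := by
      rw [hUinv, hHdec, ← smul_mul_assoc, ← mul_smul_comm, ← Matrix.diagonal_smul]
      congr 2
    rw [h1, Matrix.exp_conj U _ hUunit, Matrix.exp_diagonal, hUinv]
    have h2 : NormedSpace.exp (fun m => -(β:ℂ) * Em m)
        = fun m => Complex.exp (-(β:ℂ) * Em m) := by
      funext m
      rw [Pi.coe_exp, ← Complex.exp_eq_exp_ℂ]
    rw [h2]
  have hexpe : ∀ m, Complex.exp (-(β:ℂ) * Em m) = (Real.exp (-β * Em m) : ℂ) := by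
    intro m
    rw [show (-(β:ℂ) * Em m) = ((-β * Em m : ℝ) : ℂ) by push_cast; ring, ← Complex.ofReal_exp]
  constructor
  · rw [hexp, Matrix.trace_mul_cycle, hUU, one_mul, Matrix.trace_diagonal]
    rw [Complex.re_sum]
    refine Finset.sum_congr rfl fun m _ => ?_
    rw [hexpe m, Complex.ofReal_re]
  · have hdiag : ∀ m, (Uᴴ * O * U) m m = star (v m) ⬝ᵥ O.mulVec (v m) := by
      intro m
      simp only [Matrix.mul_apply, Matrix.conjTranspose_apply, dotProduct,
        Matrix.mulVec, hUdef, Matrix.of_apply, Pi.star_apply, Finset.sum_mul,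
        Finset.mul_sum, mul_assoc]
      rw [Finset.sum_comm]
    have hassoc : U * Matrix.diagonal (fun m => Complex.exp (-(β : ℂ) * Em m)) * Uᴴ * O
        = U * (Matrix.diagonal (fun m => Complex.exp (-(β : ℂ) * Em m)) * (Uᴴ * O)) := by
      rw [mul_assoc, mul_assoc]
    rw [hexp, hassoc, Matrix.trace_mul_comm, mul_assoc, Matrix.trace]
    simp only [Matrix.diag_apply, Matrix.diagonal_mul, Complex.re_sum]
    refine Finset.sum_congr rfl fun m _ => ?_
    rw [hdiag m, hexpe m, Complex.re_ofReal_mul]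

private lemma aux_cover (N : ℕ) (Em : Fin N → ℝ) (β Δ E μ W : ℝ)
    (hβ : 0 ≤ β) (hΔ : 0 < Δ) (hW : 0 < W)
    (hmax : ∀ E' : ℝ,
      Real.exp (-β * E') *
          ((Finset.univ.filter fun m => E' - Δ < Em m ∧ Em m ≤ E').card : ℝ)
        ≤ Real.exp (-β * E) *
          ((Finset.univ.filter fun m => E - Δ < Em m ∧ Em m ≤ E).card : ℝ))
    (hconc : (∑ m, Real.exp (-β * Em m)) / 2
        ≤ ∑ m ∈ Finset.univ.filter (fun m => μ - W / 2 < Em m ∧ Em m ≤ μ + W / 2),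
            Real.exp (-β * Em m)) :
    (∑ m, Real.exp (-β * Em m)) ≤ 2 * Real.exp (β * Δ) * (3 + W / Δ) *
      (Real.exp (-β * E) *
        ((Finset.univ.filter fun m => E - Δ < Em m ∧ Em m ≤ E).card : ℝ)) := by
  classical
  set a : Fin N → ℝ := fun m => Real.exp (-β * Em m) with ha
  set K := ⌈W / Δ⌉₊ with hKdef
  have hWΔ : 0 < W / Δ := div_pos hW hΔ
  have hKle : (K : ℝ) ≤ W / Δ + 1 := le_of_lt (Nat.ceil_lt_add_one hWΔ.le)
  set Ek : ℕ → ℝ := fun k => μ - W / 2 + (k + 1) * Δ with hEk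
  have cover : ∀ m : Fin N, (μ - W / 2 < Em m ∧ Em m ≤ μ + W / 2) →
      ∃ k ∈ Finset.range K, Ek k - Δ < Em m ∧ Em m ≤ Ek k := by
    intro m ⟨h1, h2⟩
    set t := Em m - (μ - W / 2) with htdef
    have ht0 : 0 < t := by simp [htdef]; linarith
    have htW : t ≤ W := by simp [htdef]; linarith
    set j := ⌈t / Δ⌉₊ with hjdef
    have hj1 : 1 ≤ j := Nat.one_le_ceil_iff.mpr (div_pos ht0 hΔ)
    have hjK : j ≤ K := Nat.ceil_le_ceil (by gcongr)
    have hcast : ((j - 1 : ℕ) : ℝ) = (j : ℝ) - 1 := by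
      push_cast [Nat.cast_sub hj1]; ring
    refine ⟨j - 1, Finset.mem_range.mpr (by omega), ?_, ?_⟩
    · have hlt : ((j - 1 : ℕ) : ℝ) < t / Δ := by
        by_contra hc
        push_neg at hc
        have := Nat.ceil_le.mpr hc
        omega
      rw [hcast] at hlt
      have h3 : ((j : ℝ) - 1) * Δ < t := (lt_div_iff₀ hΔ).mp hlt
      rw [htdef] at h3
      rw [hEk]
      push_cast [hcast]
      nlinarith [h3]
    · have h3 : t ≤ (j : ℝ) * Δ := (div_le_iff₀ hΔ).mp (Nat.le_ceil (t / Δ))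
      rw [htdef] at h3
      rw [hEk]
      push_cast [hcast]
      nlinarith [h3]
  have hanonneg : ∀ m, 0 ≤ a m := fun m => (Real.exp_pos _).le
  have step : ∀ k ∈ Finset.range K,
      (∑ m ∈ Finset.univ.filter (fun m => Ek k - Δ < Em m ∧ Em m ≤ Ek k), a m)
        ≤ Real.exp (β * Δ) * (Real.exp (-β * E) *
            ((Finset.univ.filter fun m => E - Δ < Em m ∧ Em m ≤ E).card : ℝ)) := by
    intro k _
    have h1 : (∑ m ∈ Finset.univ.filter (fun m => Ek k - Δ < Em m ∧ Em m ≤ Ek k), a m)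
        ≤ (Finset.univ.filter (fun m => Ek k - Δ < Em m ∧ Em m ≤ Ek k)).card
            • (Real.exp (β * Δ) * Real.exp (-β * Ek k)) := by
      apply Finset.sum_le_card_nsmul
      intro m hm
      rw [Finset.mem_filter] at hm
      rw [ha, ← Real.exp_add]
      apply Real.exp_le_exp.mpr
      nlinarith [hm.2.1]
    rw [nsmul_eq_mul] at h1
    calc _ ≤ _ := h1
      _ = Real.exp (β * Δ) * (Real.exp (-β * Ek k) *
            ((Finset.univ.filter fun m => Ek k - Δ < Em m ∧ Em m ≤ Ek k).card : ℝ)) := by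
          ring
      _ ≤ _ := by
          have := hmax (Ek k)
          gcongr
  have hwin : (∑ m ∈ Finset.univ.filter (fun m => μ - W / 2 < Em m ∧ Em m ≤ μ + W / 2), a m)
      ≤ ∑ k ∈ Finset.range K,
          ∑ m ∈ Finset.univ.filter (fun m => Ek k - Δ < Em m ∧ Em m ≤ Ek k), a m := by
    have hle : ∀ m ∈ Finset.univ.filter (fun m => μ - W / 2 < Em m ∧ Em m ≤ μ + W / 2),
        a m ≤ ∑ k ∈ Finset.range K, if Ek k - Δ < Em m ∧ Em m ≤ Ek k then a m else 0 := by
      intro m hm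
      rw [Finset.mem_filter] at hm
      obtain ⟨k, hk, hkm⟩ := cover m hm.2
      have := Finset.single_le_sum
        (f := fun k => if Ek k - Δ < Em m ∧ Em m ≤ Ek k then a m else 0)
        (fun k _ => by by_cases h : Ek k - Δ < Em m ∧ Em m ≤ Ek k <;>
          simp [h, hanonneg m]) hk
      simpa [hkm] using this
    calc _ ≤ ∑ m ∈ Finset.univ.filter (fun m => μ - W / 2 < Em m ∧ Em m ≤ μ + W / 2),
          ∑ k ∈ Finset.range K, if Ek k - Δ < Em m ∧ Em m ≤ Ek k then a m else 0 :=
        Finset.sum_le_sum hle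
      _ = ∑ k ∈ Finset.range K,
          ∑ m ∈ Finset.univ.filter (fun m => μ - W / 2 < Em m ∧ Em m ≤ μ + W / 2),
            (if Ek k - Δ < Em m ∧ Em m ≤ Ek k then a m else 0) := Finset.sum_comm
      _ ≤ _ := by
        apply Finset.sum_le_sum
        intro k _
        rw [← Finset.sum_filter]
        apply Finset.sum_le_sum_of_subset_of_nonneg
        · intro m hm
          rw [Finset.mem_filter] at hm ⊢
          exact ⟨Finset.mem_univ m, hm.2⟩
        · intro m _ _
          exact hanonneg m
  have htot : (∑ m, a m) / 2 ≤ K * (Real.exp (β * Δ) * (Real.exp (-β * E) *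
      ((Finset.univ.filter fun m => E - Δ < Em m ∧ Em m ≤ E).card : ℝ))) := by
    calc (∑ m, a m) / 2 ≤ _ := hconc
      _ ≤ _ := hwin
      _ ≤ ∑ _k ∈ Finset.range K, Real.exp (β * Δ) * (Real.exp (-β * E) *
          ((Finset.univ.filter fun m => E - Δ < Em m ∧ Em m ≤ E).card : ℝ)) :=
        Finset.sum_le_sum step
      _ = _ := by rw [Finset.sum_const, Finset.card_range, nsmul_eq_mul]
  have hKle3 : (K : ℝ) ≤ 3 + W / Δ := by linarith
  have hpos : 0 ≤ Real.exp (β * Δ) * (Real.exp (-β * E) *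
      ((Finset.univ.filter fun m => E - Δ < Em m ∧ Em m ≤ E).card : ℝ)) := by positivity
  nlinarith [htot]

/-- inequality (S.38): if the canonical energy distribution is
concentrated in a window of width `W` around `⟨H⟩_β`, and `E` maximizes
`e^{-βE'} N_{E',Δ}`, then the microcanonical average of any positive semidefinite `O`
over the shell `(E-Δ, E]` is at most `2 e^{βΔ} (3 + W/Δ)` times its canonical average. -/
theorem microcanonical_le_canonical
    (N : ℕ) (H : Matrix (Fin N) (Fin N) ℂ) (hH : H.IsHermitian)
    (v : Fin N → Fin N → ℂ) (Em : Fin N → ℝ)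
    (honb : ∀ m m', star (v m) ⬝ᵥ v m' = if m = m' then 1 else 0)
    (heig : ∀ m, H.mulVec (v m) = Em m • v m)
    (β Δ E : ℝ) (hβ : 0 ≤ β) (hΔ : 0 < Δ)
    -- the shell (E-Δ, E] is nonempty
    (hNE : 1 ≤ (Finset.univ.filter fun m => E - Δ < Em m ∧ Em m ≤ E).card)
    -- E maximizes e^{-βE'} N_{E',Δ}
    (hmax : ∀ E' : ℝ,
      Real.exp (-β * E') *
          ((Finset.univ.filter fun m => E' - Δ < Em m ∧ Em m ≤ E').card : ℝ)
        ≤ Real.exp (-β * E) *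
          ((Finset.univ.filter fun m => E - Δ < Em m ∧ Em m ≤ E).card : ℝ))
    -- concentration of the canonical energy distribution in a window of width W
    (W : ℝ) (hW : 0 < W)
    (hconc :
      ((NormedSpace.exp ((-(β : ℂ)) • H)).trace).re / 2
        ≤ ∑ m ∈ Finset.univ.filter (fun m =>
            ((NormedSpace.exp ((-(β : ℂ)) • H) * H).trace).re
                / ((NormedSpace.exp ((-(β : ℂ)) • H)).trace).re - W / 2 < Em m ∧
            Em m ≤ ((NormedSpace.exp ((-(β : ℂ)) • H) * H).trace).re
                / ((NormedSpace.exp ((-(β : ℂ)) • H)).trace).re + W / 2),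
            Real.exp (-β * Em m))
    (O : Matrix (Fin N) (Fin N) ℂ) (hO : O.PosSemidef) :
    (∑ m ∈ Finset.univ.filter (fun m => E - Δ < Em m ∧ Em m ≤ E),
        (star (v m) ⬝ᵥ O.mulVec (v m)).re)
        / ((Finset.univ.filter fun m => E - Δ < Em m ∧ Em m ≤ E).card : ℝ)
      ≤ 2 * Real.exp (β * Δ) * (3 + W / Δ) *
        (((NormedSpace.exp ((-(β : ℂ)) • H) * O).trace).re
          / ((NormedSpace.exp ((-(β : ℂ)) • H)).trace).re) := by
  classical
  obtain ⟨hZre, hTre⟩ := aux_traces N H v Em honb heig β O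
  have ho : ∀ m, 0 ≤ (star (v m) ⬝ᵥ O.mulVec (v m)).re := by
    intro m
    have h := hO.dotProduct_mulVec_nonneg (v m)
    simpa using (Complex.le_def.mp h).1
  have hstep2 := aux_cover N Em β Δ E
    (((NormedSpace.exp ((-(β : ℂ)) • H) * H).trace).re
      / ((NormedSpace.exp ((-(β : ℂ)) • H)).trace).re) W hβ hΔ hW hmax
    (by rw [← hZre]; exact hconc)
  rw [hZre, hTre]
  set S := Finset.univ.filter fun m => E - Δ < Em m ∧ Em m ≤ E with hS
  set n : ℝ := (S.card : ℝ) with hn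
  have hn1 : (1 : ℝ) ≤ n := by rw [hn]; exact_mod_cast hNE
  have hSne : S.Nonempty := Finset.card_pos.mp hNE
  obtain ⟨m0, _⟩ := hSne
  have hZpos : 0 < ∑ m, Real.exp (-β * Em m) :=
    Finset.sum_pos (fun m _ => Real.exp_pos _) ⟨m0, Finset.mem_univ m0⟩
  have hAnn : 0 ≤ ∑ m ∈ S, (star (v m) ⬝ᵥ O.mulVec (v m)).re :=
    Finset.sum_nonneg fun m _ => ho m
  have hTnn : 0 ≤ ∑ m, Real.exp (-β * Em m) * (star (v m) ⬝ᵥ O.mulVec (v m)).re :=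
    Finset.sum_nonneg fun m _ => mul_nonneg (Real.exp_pos _).le (ho m)
  have hstep1 : Real.exp (-β * E) * ∑ m ∈ S, (star (v m) ⬝ᵥ O.mulVec (v m)).re
      ≤ ∑ m, Real.exp (-β * Em m) * (star (v m) ⬝ᵥ O.mulVec (v m)).re := by
    rw [Finset.mul_sum]
    calc ∑ m ∈ S, Real.exp (-β * E) * (star (v m) ⬝ᵥ O.mulVec (v m)).re
        ≤ ∑ m ∈ S, Real.exp (-β * Em m) * (star (v m) ⬝ᵥ O.mulVec (v m)).re := by
          apply Finset.sum_le_sum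
          intro m hm
          have hmE : Em m ≤ E := (Finset.mem_filter.mp hm).2.2
          exact mul_le_mul_of_nonneg_right
            (Real.exp_le_exp.mpr (by nlinarith)) (ho m)
      _ ≤ _ := Finset.sum_le_sum_of_subset_of_nonneg (Finset.filter_subset _ _)
          (fun m _ _ => mul_nonneg (Real.exp_pos _).le (ho m))
  have hC : 0 ≤ 2 * Real.exp (β * Δ) * (3 + W / Δ) := by
    have := div_pos hW hΔ
    nlinarith [Real.exp_pos (β * Δ)]
  have hnpos : 0 < n := lt_of_lt_of_le one_pos hn1
  rw [show 2 * Real.exp (β * Δ) * (3 + W / Δ) *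
      ((∑ m, Real.exp (-β * Em m) * (star (v m) ⬝ᵥ O.mulVec (v m)).re)
        / ∑ m, Real.exp (-β * Em m))
      = (2 * Real.exp (β * Δ) * (3 + W / Δ) *
        (∑ m, Real.exp (-β * Em m) * (star (v m) ⬝ᵥ O.mulVec (v m)).re))
        / ∑ m, Real.exp (-β * Em m) from (mul_div_assoc _ _ _).symm,
    div_le_div_iff₀ hnpos hZpos]
  have hexppos := Real.exp_pos (-β * E)
  calc (∑ m ∈ S, (star (v m) ⬝ᵥ O.mulVec (v m)).re) * ∑ m, Real.exp (-β * Em m)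
      ≤ (∑ m ∈ S, (star (v m) ⬝ᵥ O.mulVec (v m)).re) *
        (2 * Real.exp (β * Δ) * (3 + W / Δ) * (Real.exp (-β * E) * n)) :=
        mul_le_mul_of_nonneg_left hstep2 hAnn
    _ = (2 * Real.exp (β * Δ) * (3 + W / Δ) * n) *
        (Real.exp (-β * E) * ∑ m ∈ S, (star (v m) ⬝ᵥ O.mulVec (v m)).re) := by ring
    _ ≤ (2 * Real.exp (β * Δ) * (3 + W / Δ) * n) *
        (∑ m, Real.exp (-β * Em m) * (star (v m) ⬝ᵥ O.mulVec (v m)).re) :=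
        mul_le_mul_of_nonneg_left hstep1 (by positivity)
    _ = 2 * Real.exp (β * Δ) * (3 + W / Δ) *
        (∑ m, Real.exp (-β * Em m) * (star (v m) ⬝ᵥ O.mulVec (v m)).re) * n := by ring
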